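/- For every real f, the standard deviation of the normalized zero-delay cut of the random-PRI ambiguity function is strictly less than 1/√M: std[|Λ_yy(0, f)| / |Λ_yy(0, 0)|] < 1/√M, where |Λ_yy(0,0)| = M T_p and std denotes the square root of the variance. -/

import Mathlib

open MeasureTheory ProbabilityTheory Real Finset

/-- Rectangular pulse of width `Tp`: equals `1` on `(0, Tp]` and `0` elsewhere. -/
noncomputable def pulse (Tp t : ℝ) : ℂ :=
  if 0 < t ∧ t ≤ Tp then 1 else 0

/-- Pulse train of `M` pulses with nominal PRI `Tr`, pulse width `Tp`, and jitters `ε`. -/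
noncomputable def train (M : ℕ) (Tr Tp : ℝ) (ε : ℕ → ℝ) (t : ℝ) : ℂ :=
  ∑ m ∈ Finset.range M, pulse Tp (t - m * Tr - ε m)

/-- Ambiguity function `Λ_uu(τ, f) = ∫ u(t) u*(t-τ) e^{-j2πft} dt`. -/
noncomputable def AF (u : ℝ → ℂ) (τ f : ℝ) : ℂ :=
  ∫ t : ℝ, u t * (starRingEnd ℂ) (u (t - τ)) * Complex.exp (-(2 * Real.pi * f * t) * Complex.I)

/-- `sinc x = sin x / x`, with `sinc 0 = 1`. -/
noncomputable def sinc (x : ℝ) : ℝ := if x = 0 then 1 else Real.sin x / x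

noncomputable def eθ (x : ℝ) : ℂ := Complex.exp ((x : ℂ) * Complex.I)
lemma eθ_continuous : Continuous eθ := by
  unfold eθ
  exact Complex.continuous_exp.comp ((Complex.continuous_ofReal).mul continuous_const)

lemma eθ_norm (x : ℝ) : ‖eθ x‖ = 1 := Complex.norm_exp_ofReal_mul_I x
lemma eθ_re (x : ℝ) : (eθ x).re = Real.cos x := Complex.exp_ofReal_mul_I_re x
lemma eθ_im (x : ℝ) : (eθ x).im = Real.sin x := Complex.exp_ofReal_mul_I_im x
lemma eθ_add (x y : ℝ) : eθ (x + y) = eθ x * eθ y := by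
  unfold eθ; rw [← Complex.exp_add]; push_cast; ring_nf
lemma pulse_sub_mul (Tp c : ℝ) (g : ℝ → ℂ) :
    (fun t => pulse Tp (t - c) * g t) = (Set.Ioc c (c + Tp)).indicator g := by
  funext t
  simp only [pulse, Set.indicator, Set.mem_Ioc]
  by_cases h : c < t ∧ t ≤ c + Tp
  · rw [if_pos ⟨by linarith [h.1], by linarith [h.2]⟩, if_pos h, one_mul]
  · rw [if_neg (fun hc => h ⟨by linarith [hc.1], by linarith [hc.2]⟩), if_neg h, zero_mul]
lemma integrable_pulse_mul (Tp c : ℝ) {g : ℝ → ℂ} (hg : Continuous g) :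
    Integrable (fun t => pulse Tp (t - c) * g t) := by
  rw [pulse_sub_mul, integrable_indicator_iff measurableSet_Ioc]
  exact hg.integrableOn_Ioc

lemma train_sq (M : ℕ) (Tr Tp ρ : ℝ) (hTp : 0 < Tp) (hρ : 0 < ρ) (hρTr : ρ ≤ Tr - 2 * Tp)
    (e : ℕ → ℝ) (he : ∀ m, m < M → |e m| ≤ ρ / 2) (t : ℝ) :
    train M Tr Tp e t * (starRingEnd ℂ) (train M Tr Tp e t) = train M Tr Tp e t := by
  have hTr : 0 < Tr := by linarith
  have : train M Tr Tp e t = 0 ∨ train M Tr Tp e t = 1 := by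
    unfold train
    by_cases hex : ∃ m, m ∈ Finset.range M ∧ (0 < t - m * Tr - e m ∧ t - m * Tr - e m ≤ Tp)
    · right
      obtain ⟨m, hmM, hm⟩ := hex
      rw [Finset.sum_eq_single_of_mem m hmM]
      · simp [pulse, hm]
      · intro k hk hkm
        simp only [pulse]
        rw [if_neg]
        rintro ⟨h1, h2⟩
        have hkM := Finset.mem_range.mp hk
        have hmM' := Finset.mem_range.mp hmM
        have h3 := abs_le.mp (he m hmM')
        have h4 := abs_le.mp (he k hkM)
        have hmk : ((m : ℤ)) ≠ (k : ℤ) := by exact_mod_cast hkm.symm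
        have hd : 1 ≤ |(m : ℝ) - (k : ℝ)| := by
          have : 1 ≤ |(m : ℤ) - (k : ℤ)| := Int.one_le_abs (sub_ne_zero.mpr hmk)
          calc (1:ℝ) ≤ ((|(m : ℤ) - (k : ℤ)| : ℤ) : ℝ) := by exact_mod_cast this
            _ = |(m : ℝ) - (k : ℝ)| := by push_cast [Int.cast_abs]; norm_num
        rcases abs_le.mp (le_refl |(m : ℝ) - (k : ℝ)|) with _
        rcases le_or_gt 1 ((m : ℝ) - k) with hge | hlt
        · have := mul_le_mul_of_nonneg_right hge (le_of_lt hTr)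
          rw [one_mul] at this
          nlinarith [hm.1, hm.2]
        · have hle : (m : ℝ) - k ≤ -1 := by
            rcases abs_cases ((m : ℝ) - k) with ⟨h5, _⟩ | ⟨h5, _⟩
            · rw [h5] at hd; linarith
            · rw [h5] at hd; linarith
          have := mul_le_mul_of_nonneg_right hle (le_of_lt hTr)
          rw [neg_one_mul] at this
          nlinarith [hm.1, hm.2]
    · left
      apply Finset.sum_eq_zero
      intro k hk
      simp only [pulse]
      rw [if_neg]
      exact fun hc => hex ⟨k, hk, hc⟩
  rcases this with h | h <;> simp [h]

lemma AF_train (M : ℕ) (Tr Tp ρ f : ℝ) (hTp : 0 < Tp) (hρ : 0 < ρ) (hρTr : ρ ≤ Tr - 2 * Tp)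
    (e : ℕ → ℝ) (he : ∀ m, m < M → |e m| ≤ ρ / 2) :
    AF (train M Tr Tp e) 0 f =
      (∑ m ∈ Finset.range M, eθ (-(2 * π * f * (m * Tr + e m)))) *
        ∫ s : ℝ, pulse Tp s * eθ (-(2 * π * f * s)) := by
  unfold AF
  simp only [sub_zero]
  have hexp : ∀ t : ℝ, Complex.exp (-(2 * (π : ℂ) * f * t) * Complex.I) = eθ (-(2 * π * f * t)) := by
    intro t; unfold eθ; push_cast; ring_nf
  calc (∫ t : ℝ, train M Tr Tp e t * (starRingEnd ℂ) (train M Tr Tp e t) *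
          Complex.exp (-(2 * (π:ℂ) * f * t) * Complex.I))
      = ∫ t : ℝ, ∑ m ∈ Finset.range M, pulse Tp (t - (m * Tr + e m)) * eθ (-(2 * π * f * t)) := by
        congr 1
        funext t
        rw [train_sq M Tr Tp ρ hTp hρ hρTr e he t, hexp t]
        unfold train
        rw [Finset.sum_mul]
        congr 1
        funext m
        rw [sub_sub]
    _ = ∑ m ∈ Finset.range M, ∫ t : ℝ, pulse Tp (t - (m * Tr + e m)) * eθ (-(2 * π * f * t)) := by
        rw [integral_finset_sum]
        intro m _
        exact integrable_pulse_mul Tp _ (eθ_continuous.comp (by continuity))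
    _ = ∑ m ∈ Finset.range M, eθ (-(2 * π * f * (m * Tr + e m))) *
          ∫ s : ℝ, pulse Tp s * eθ (-(2 * π * f * s)) := by
        apply Finset.sum_congr rfl
        intro m _
        set a : ℝ := m * Tr + e m with ha
        have h1 : (∫ t : ℝ, pulse Tp (t - a) * eθ (-(2 * π * f * t)))
            = ∫ s : ℝ, pulse Tp s * eθ (-(2 * π * f * (s + a))) := by
          rw [← integral_add_right_eq_self (fun s => pulse Tp s * eθ (-(2 * π * f * (s + a)))) (-a)]
          congr 1
          funext t
          rw [show t + -a = t - a by ring, show t - a + a = t by ring]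
        rw [h1]
        have h2 : ∀ s : ℝ, eθ (-(2 * π * f * (s + a)))
            = eθ (-(2 * π * f * s)) * eθ (-(2 * π * f * a)) := by
          intro s
          rw [← eθ_add]
          ring_nf
        simp_rw [h2, ← mul_assoc]
        rw [integral_mul_const, mul_comm]
    _ = _ := by rw [← Finset.sum_mul]

lemma variance_congr' {Ω : Type*} {mΩ : MeasurableSpace Ω} {μ : Measure Ω} {X Y : Ω → ℝ}
    (h : X =ᵐ[μ] Y) : variance X μ = variance Y μ := by
  have h1 : μ[X] = μ[Y] := integral_congr_ae h
  unfold ProbabilityTheory.variance ProbabilityTheory.evariance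
  rw [h1]
  exact congrArg ENNReal.toReal (lintegral_congr_ae (h.mono fun ω hω => by simp only [hω]))

lemma variance_const' {Ω : Type*} {mΩ : MeasurableSpace Ω} (μ : Measure Ω) [IsProbabilityMeasure μ]
    (c : ℝ) : variance (fun _ => c) μ = 0 := by
  rw [variance_eq_sub (memLp_const c)]
  have h1 : ((fun _ => c : Ω → ℝ) ^ 2) = fun _ : Ω => c ^ 2 := by funext ω; simp [Pi.pow_apply]
  rw [h1]
  simp [integral_const]

lemma P_norm_le (Tp f : ℝ) (hTp : 0 < Tp) :
    ‖∫ s : ℝ, pulse Tp s * eθ (-(2 * π * f * s))‖ ≤ Tp := by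
  calc ‖∫ s : ℝ, pulse Tp s * eθ (-(2 * π * f * s))‖
      ≤ ∫ s : ℝ, ‖pulse Tp s * eθ (-(2 * π * f * s))‖ := norm_integral_le_integral_norm _
    _ = ∫ s : ℝ, (Set.Ioc (0:ℝ) Tp).indicator (fun _ => (1:ℝ)) s := by
        congr 1
        funext s
        rw [norm_mul, eθ_norm, mul_one]
        simp only [pulse, Set.indicator, Set.mem_Ioc]
        split_ifs with h1 h2 h2 <;> simp_all
    _ = Tp := by
        rw [integral_indicator_const _ measurableSet_Ioc]
        simp [Real.volume_Ioc, ENNReal.toReal_ofReal hTp.le, hTp.le]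

lemma variance_core {Ω : Type*} {mΩ : MeasurableSpace Ω} (μ : Measure Ω) [IsProbabilityMeasure μ]
    (M : ℕ) (hM : 1 ≤ M) (Tr f : ℝ) (ε : ℕ → Ω → ℝ) (hε0 : ∀ ω, ε 0 ω = 0)
    (hmeas : ∀ m, Measurable (ε m))
    (hindep : iIndepFun (fun m : Fin M => ε (m : ℕ)) μ) :
    variance (fun ω => ‖∑ m ∈ Finset.range M, eθ (-(2 * π * f * ((m : ℝ) * Tr + ε m ω)))‖) μ
      ≤ (M : ℝ) - 1 := by
  classical
  set T : Ω → ℂ := fun ω => ∑ m ∈ Finset.range M, eθ (-(2 * π * f * ((m:ℝ) * Tr + ε m ω)))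
    with hTdef
  set g : Ω → ℝ := fun ω => ‖T ω‖ with hgdef
  set C : ℕ → Ω → ℝ :=
    fun m => (fun x => Real.cos (-(2 * π * f * ((m:ℝ) * Tr + x)))) ∘ ε m with hCdef
  set S : ℕ → Ω → ℝ :=
    fun m => (fun x => Real.sin (-(2 * π * f * ((m:ℝ) * Tr + x)))) ∘ ε m with hSdef
  have hcont : ∀ m : ℕ, Continuous (fun x : ℝ => -(2 * π * f * ((m:ℝ) * Tr + x))) := by
    intro m; continuity
  have hCmeas : ∀ m, Measurable (C m) := fun m =>
    ((Real.continuous_cos.comp (hcont m)).measurable).comp (hmeas m)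
  have hSmeas : ∀ m, Measurable (S m) := fun m =>
    ((Real.continuous_sin.comp (hcont m)).measurable).comp (hmeas m)
  have hTmeas : Measurable T := by
    apply Finset.measurable_sum
    intro m _
    exact (eθ_continuous.comp (hcont m)).measurable.comp (hmeas m)
  have hgmeas : Measurable g := hTmeas.norm
  have hgbd : ∀ ω, ‖T ω‖ ≤ (M : ℝ) := by
    intro ω
    calc ‖T ω‖ ≤ ∑ m ∈ Finset.range M, ‖eθ (-(2 * π * f * ((m:ℝ) * Tr + ε m ω)))‖ :=
          norm_sum_le _ _
      _ = (M : ℝ) := by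
          rw [Finset.sum_congr rfl fun m _ => eθ_norm _]
          simp
  have hgmem : MemLp g 2 μ :=
    MemLp.of_bound hgmeas.aestronglyMeasurable (M : ℝ) (ae_of_all _ fun ω => by
      rw [Real.norm_eq_abs, abs_of_nonneg (norm_nonneg _)]; exact hgbd ω)
  have hCmem : ∀ m, MemLp (C m) 2 μ := fun m =>
    MemLp.of_bound (hCmeas m).aestronglyMeasurable 1 (ae_of_all _ fun ω => by
      rw [Real.norm_eq_abs]; exact Real.abs_cos_le_one _)
  have hSmem : ∀ m, MemLp (S m) 2 μ := fun m =>
    MemLp.of_bound (hSmeas m).aestronglyMeasurable 1 (ae_of_all _ fun ω => by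
      rw [Real.norm_eq_abs]; exact Real.abs_sin_le_one _)
  have hCsum_mem : MemLp (∑ m ∈ Finset.range M, C m) 2 μ :=
    memLp_finset_sum' _ (fun m _ => hCmem m)
  have hSsum_mem : MemLp (∑ m ∈ Finset.range M, S m) 2 μ :=
    memLp_finset_sum' _ (fun m _ => hSmem m)
  have hTint : Integrable T μ :=
    memLp_one_iff_integrable.mp (MemLp.of_bound hTmeas.aestronglyMeasurable (M : ℝ)
      (ae_of_all _ hgbd))
  have hTre : ∀ ω, (T ω).re = (∑ m ∈ Finset.range M, C m) ω := by
    intro ω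
    simp only [hTdef, Finset.sum_apply, Complex.re_sum]
    exact Finset.sum_congr rfl fun m _ => (eθ_re _)
  have hTim : ∀ ω, (T ω).im = (∑ m ∈ Finset.range M, S m) ω := by
    intro ω
    simp only [hTdef, Finset.sum_apply, Complex.im_sum]
    exact Finset.sum_congr rfl fun m _ => (eθ_im _)
  have hreint : μ[(∑ m ∈ Finset.range M, C m)] = (∫ ω, T ω ∂μ).re := by
    rw [← RCLike.re_to_complex (x := ∫ ω, T ω ∂μ), ← integral_re hTint]
    exact integral_congr_ae (ae_of_all _ fun ω => by
      rw [← hTre ω]; simp [RCLike.re_to_complex])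
  have himint : μ[(∑ m ∈ Finset.range M, S m)] = (∫ ω, T ω ∂μ).im := by
    rw [← RCLike.im_to_complex (x := ∫ ω, T ω ∂μ), ← integral_im hTint]
    exact integral_congr_ae (ae_of_all _ fun ω => by
      rw [← hTim ω]; simp [RCLike.im_to_complex])
  have hnormsq : ∀ z : ℂ, ‖z‖ ^ 2 = z.re ^ 2 + z.im ^ 2 := by
    intro z
    rw [Complex.sq_norm, Complex.normSq_apply]
    ring
  have hgsq : ∀ ω, g ω ^ 2 =
      (∑ m ∈ Finset.range M, C m) ω ^ 2 + (∑ m ∈ Finset.range M, S m) ω ^ 2 := by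
    intro ω
    rw [hgdef]
    simp only []
    rw [hnormsq (T ω), hTre ω, hTim ω]
  -- variance of g bounded by sum of variances
  have hvd : variance g μ = μ[g ^ 2] - μ[g] ^ 2 := variance_eq_sub hgmem
  have hnorm_le : ‖∫ ω, T ω ∂μ‖ ≤ μ[g] := norm_integral_le_integral_norm _
  have hsq_le : ‖∫ ω, T ω ∂μ‖ ^ 2 ≤ μ[g] ^ 2 := pow_le_pow_left₀ (norm_nonneg _) hnorm_le 2
  have hEsq : μ[g ^ 2] = μ[(∑ m ∈ Finset.range M, C m) ^ 2]
      + μ[(∑ m ∈ Finset.range M, S m) ^ 2] := by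
    simp only [Pi.pow_apply]
    rw [← integral_add (by simpa using hCsum_mem.integrable_sq)
      (by simpa using hSsum_mem.integrable_sq)]
    exact integral_congr_ae (ae_of_all _ fun ω => hgsq ω)
  have hETsq : ‖∫ ω, T ω ∂μ‖ ^ 2 = μ[(∑ m ∈ Finset.range M, C m)] ^ 2
      + μ[(∑ m ∈ Finset.range M, S m)] ^ 2 := by
    rw [hnormsq, hreint, himint]
  have hvle : variance g μ ≤ variance (∑ m ∈ Finset.range M, C m) μ
      + variance (∑ m ∈ Finset.range M, S m) μ := by
    rw [hvd, variance_eq_sub hCsum_mem, variance_eq_sub hSsum_mem]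
    rw [hETsq] at hsq_le
    rw [hEsq]
    linarith
  -- independence
  have hCpair : Set.Pairwise ↑(Finset.range M) fun i j => IndepFun (C i) (C j) μ := by
    intro i hi j hj hij
    have hiM : i < M := Finset.mem_range.mp hi
    have hjM : j < M := Finset.mem_range.mp hj
    exact (hindep.indepFun (show (⟨i, hiM⟩ : Fin M) ≠ ⟨j, hjM⟩ from Fin.ne_of_val_ne hij)).comp
      (Real.continuous_cos.comp (hcont i)).measurable
      (Real.continuous_cos.comp (hcont j)).measurable
  have hSpair : Set.Pairwise ↑(Finset.range M) fun i j => IndepFun (S i) (S j) μ := by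
    intro i hi j hj hij
    have hiM : i < M := Finset.mem_range.mp hi
    have hjM : j < M := Finset.mem_range.mp hj
    exact (hindep.indepFun (show (⟨i, hiM⟩ : Fin M) ≠ ⟨j, hjM⟩ from Fin.ne_of_val_ne hij)).comp
      (Real.continuous_sin.comp (hcont i)).measurable
      (Real.continuous_sin.comp (hcont j)).measurable
  have hCsum : variance (∑ m ∈ Finset.range M, C m) μ
      = ∑ m ∈ Finset.range M, variance (C m) μ :=
    IndepFun.variance_sum (fun m _ => hCmem m) hCpair
  have hSsum : variance (∑ m ∈ Finset.range M, S m) μ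
      = ∑ m ∈ Finset.range M, variance (S m) μ :=
    IndepFun.variance_sum (fun m _ => hSmem m) hSpair
  -- per-term bound
  have hterm : ∀ m, variance (C m) μ + variance (S m) μ ≤ 1 := by
    intro m
    have h1 : variance (C m) μ ≤ μ[(C m) ^ 2] :=
      variance_le_expectation_sq (hCmeas m).aestronglyMeasurable
    have h2 : variance (S m) μ ≤ μ[(S m) ^ 2] :=
      variance_le_expectation_sq (hSmeas m).aestronglyMeasurable
    have h3 : μ[(C m) ^ 2] + μ[(S m) ^ 2] = 1 := by
      simp only [Pi.pow_apply]
      rw [← integral_add (by simpa using (hCmem m).integrable_sq)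
        (by simpa using (hSmem m).integrable_sq)]
      have : ∀ ω, C m ω ^ 2 + S m ω ^ 2 = 1 := fun ω => by
        simp only [hCdef, hSdef, Function.comp_apply]
        exact Real.cos_sq_add_sin_sq _
      rw [integral_congr_ae (ae_of_all _ this)]
      simp
    linarith
  have hzeroC : variance (C 0) μ = 0 := by
    have hc : C 0 = fun _ => (1:ℝ) := by
      funext ω
      simp [hCdef, Function.comp_apply, hε0 ω]
    rw [hc, variance_const' μ 1]
  have hzeroS : variance (S 0) μ = 0 := by
    have hs : S 0 = fun _ => (0:ℝ) := by
      funext ω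
      simp [hSdef, Function.comp_apply, hε0 ω]
    rw [hs, variance_const' μ 0]
  -- assemble
  obtain ⟨N, rfl⟩ : ∃ N, M = N + 1 := ⟨M - 1, (Nat.succ_pred_eq_of_pos hM).symm⟩
  calc variance g μ
      ≤ ∑ m ∈ Finset.range (N + 1), (variance (C m) μ + variance (S m) μ) := by
        rw [Finset.sum_add_distrib]
        rw [hCsum, hSsum] at hvle
        exact hvle
    _ ≤ (N : ℝ) := by
        rw [Finset.sum_range_succ', hzeroC, hzeroS]
        have hle : ∑ m ∈ Finset.range N, (variance (C (m+1)) μ + variance (S (m+1)) μ)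
            ≤ ∑ _m ∈ Finset.range N, (1:ℝ) := Finset.sum_le_sum fun m _ => hterm (m+1)
        simp only [Finset.sum_const, Finset.card_range, nsmul_eq_mul, mul_one] at hle
        linarith
    _ = ((N + 1 : ℕ) : ℝ) - 1 := by push_cast; ring

/-- For every `f`, the standard deviation of the normalized zero-delay cut
is strictly less than `1/√M`. -/
theorem doppler_cut_std_lt
    {Ω : Type*} [MeasurableSpace Ω] (μ : Measure Ω) [IsProbabilityMeasure μ]
    (M : ℕ) (hM : 1 ≤ M) (Tr Tp ρ : ℝ) (hTp : 0 < Tp) (hρ : 0 < ρ)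
    (hρTr : ρ ≤ Tr - 2 * Tp)
    (ε : ℕ → Ω → ℝ) (hε0 : ∀ ω, ε 0 ω = 0)
    (hmeas : ∀ m, Measurable (ε m))
    (hdist : ∀ m, 1 ≤ m → m ≤ M - 1 →
      Measure.map (ε m) μ = (ENNReal.ofReal ρ)⁻¹ • volume.restrict (Set.Ioo (-(ρ / 2)) (ρ / 2)))
    (hindep : iIndepFun (fun m : Fin M => ε (m : ℕ)) μ)
    (f : ℝ) :
    Real.sqrt (variance (fun ω => ‖AF (train M Tr Tp (fun k => ε k ω)) 0 f‖ / ((M : ℝ) * Tp)) μ)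
      < 1 / Real.sqrt M := by
  have hM0 : (0:ℝ) < M := by exact_mod_cast hM
  -- almost everywhere, all jitters are within the allowed range
  have hae : ∀ᵐ ω ∂μ, ∀ m, m < M → |ε m ω| ≤ ρ / 2 := by
    rw [ae_all_iff]
    intro m
    rcases Nat.eq_zero_or_pos m with rfl | hm1
    · exact ae_of_all _ fun ω _ => by rw [hε0 ω, abs_zero]; linarith
    · by_cases hmM : m < M
      · have hm2 : m ≤ M - 1 := Nat.le_sub_one_of_lt hmM
        have hset : μ (ε m ⁻¹' Set.Ioo (-(ρ/2)) (ρ/2)) = 1 := by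
          rw [← Measure.map_apply (hmeas m) measurableSet_Ioo, hdist m hm1 hm2]
          rw [Measure.smul_apply, Measure.restrict_apply measurableSet_Ioo, Set.inter_self,
            Real.volume_Ioo, smul_eq_mul]
          rw [show ρ/2 - -(ρ/2) = ρ by ring]
          exact ENNReal.inv_mul_cancel
            (by simp only [ne_eq, ENNReal.ofReal_eq_zero, not_le]; linarith)
            ENNReal.ofReal_ne_top
        have hcompl : μ ((ε m ⁻¹' Set.Ioo (-(ρ/2)) (ρ/2))ᶜ) = 0 := by
          rw [measure_compl ((hmeas m) measurableSet_Ioo) (measure_ne_top μ _), hset]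
          simp
        have hmem : ∀ᵐ ω ∂μ, ε m ω ∈ Set.Ioo (-(ρ/2)) (ρ/2) := by
          rw [ae_iff]; exact hcompl
        filter_upwards [hmem] with ω hω _
        rcases Set.mem_Ioo.mp hω with ⟨h1, h2⟩
        rw [abs_le]; exact ⟨by linarith, by linarith⟩
      · exact ae_of_all _ fun ω hc => absurd hc hmM
  -- rewrite the random variable a.e. as a constant times the norm of the phase sum
  have hXY : (fun ω => ‖AF (train M Tr Tp (fun k => ε k ω)) 0 f‖ / ((M : ℝ) * Tp)) =ᵐ[μ]
      fun ω => (‖∫ s : ℝ, pulse Tp s * eθ (-(2 * π * f * s))‖ / ((M:ℝ) * Tp)) *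
        ‖∑ m ∈ Finset.range M, eθ (-(2 * π * f * ((m:ℝ) * Tr + ε m ω)))‖ := by
    filter_upwards [hae] with ω hω
    have h1 := AF_train M Tr Tp ρ f hTp hρ hρTr (fun k => ε k ω) hω
    rw [h1, norm_mul]
    ring
  rw [variance_congr' hXY, variance_const_mul]
  have hcore := variance_core μ M hM Tr f ε hε0 hmeas hindep
  have hκ0 : 0 ≤ ‖∫ s : ℝ, pulse Tp s * eθ (-(2 * π * f * s))‖ / ((M:ℝ) * Tp) :=
    div_nonneg (norm_nonneg _) (by positivity)
  have hκle : ‖∫ s : ℝ, pulse Tp s * eθ (-(2 * π * f * s))‖ / ((M:ℝ) * Tp) ≤ 1 / M := by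
    rw [div_le_div_iff₀ (by positivity) hM0]
    have hPle := P_norm_le Tp f hTp
    nlinarith [norm_nonneg (∫ s : ℝ, pulse Tp s * eθ (-(2 * π * f * s)))]
  have hvar_lt : (‖∫ s : ℝ, pulse Tp s * eθ (-(2 * π * f * s))‖ / ((M:ℝ) * Tp)) ^ 2 *
      variance (fun ω => ‖∑ m ∈ Finset.range M, eθ (-(2 * π * f * ((m:ℝ) * Tr + ε m ω)))‖) μ
      < 1 / M := by
    have h1 := mul_le_mul_of_nonneg_left hcore
      (sq_nonneg (‖∫ s : ℝ, pulse Tp s * eθ (-(2 * π * f * s))‖ / ((M:ℝ) * Tp)))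
    have h2 : (‖∫ s : ℝ, pulse Tp s * eθ (-(2 * π * f * s))‖ / ((M:ℝ) * Tp)) ^ 2 ≤ (1/M) ^ 2 :=
      pow_le_pow_left₀ hκ0 hκle 2
    have hM1 : (1:ℝ) ≤ M := by exact_mod_cast hM
    have h3 : (‖∫ s : ℝ, pulse Tp s * eθ (-(2 * π * f * s))‖ / ((M:ℝ) * Tp)) ^ 2 * ((M:ℝ) - 1)
        ≤ (1/(M:ℝ))^2 * ((M:ℝ) - 1) := mul_le_mul_of_nonneg_right h2 (by linarith)
    have h4 : (1/(M:ℝ))^2 * ((M:ℝ) - 1) < 1 / M := by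
      rw [div_pow, one_pow, div_mul_eq_mul_div, one_mul, div_lt_div_iff₀ (by positivity) hM0]
      nlinarith
    linarith
  calc Real.sqrt _
      < Real.sqrt (1 / M) := Real.sqrt_lt_sqrt
        (mul_nonneg (sq_nonneg _) (variance_nonneg _ _)) hvar_lt
    _ = 1 / Real.sqrt M := by rw [one_div, Real.sqrt_inv, one_div]
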